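/- Let Σ_n = {1,…,N}ⁿ with product measure ℙ_n from a probability vector (p₁,…,p_N), and let 𝒜 ⊆ Σ = {1,…,N}^ℕ be a measurable set with ℙ(𝒜) ≥ β > 0. For k < n there exists a set A ⊆ Σ_n with ℙ_n(Σ_n \ A) ≤ (1−β)^k such that every i ∈ A can be written as a concatenation i = i₁i₂⋯i_k of finite words (some possibly empty) with the property that for each j = 1,…,k, at least one of the shifted words i_j, σi_j, …, σ^{k−1}i_j is a prefix of some element of 𝒜. -/

import Mathlib

open Set MeasureTheory
open scoped ENNReal

/-- A finite word is dominated by `A ⊆ {1,…,N}^ℕ` if it is empty or is a prefix of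
some element of `A`. -/
def Dominated {N : ℕ} (A : Set (ℕ → Fin N)) (w : List (Fin N)) : Prop :=
  w = [] ∨ ∃ j ∈ A, ∀ t : Fin w.length, w.get t = j (t : ℕ)

namespace Stmt11Proof

variable {N : ℕ}

lemma dom_nil (𝒜 : Set (ℕ → Fin N)) : Dominated 𝒜 ([] : List (Fin N)) := Or.inl rfl

lemma dom_of_prefix {𝒜 : Set (ℕ → Fin N)} {u v : List (Fin N)} (h : u <+: v)
    (hv : Dominated 𝒜 v) : Dominated 𝒜 u := by
  rcases eq_or_ne u [] with hu | hu
  · exact Or.inl hu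
  rcases hv with hv | ⟨j, hj, hjv⟩
  · exact absurd (List.prefix_nil.mp (hv ▸ h)) hu
  refine Or.inr ⟨j, hj, fun t => ?_⟩
  have hlt : (t : ℕ) < v.length := lt_of_lt_of_le t.isLt h.length_le
  have h2 := hjv ⟨(t : ℕ), hlt⟩
  simp only [List.get_eq_getElem] at h2 ⊢
  rw [h.getElem t.isLt]
  exact h2

/-- Minimal non-dominated words. -/
def MinBad (𝒜 : Set (ℕ → Fin N)) (w : List (Fin N)) : Prop :=
  ¬ Dominated 𝒜 w ∧ Dominated 𝒜 w.dropLast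

lemma MinBad.ne_nil {𝒜 : Set (ℕ → Fin N)} {w : List (Fin N)} (h : MinBad 𝒜 w) : w ≠ [] :=
  fun h0 => h.1 (h0 ▸ dom_nil 𝒜)

lemma exists_peel {𝒜 : Set (ℕ → Fin N)} {u : List (Fin N)} (hu : ¬ Dominated 𝒜 u) :
    ∃ w r, MinBad 𝒜 w ∧ u = w ++ r := by
  classical
  have hex : ∃ m, ¬ Dominated 𝒜 (u.take m) := ⟨u.length, by rwa [List.take_length]⟩
  set m := Nat.find hex with hmdef
  have hm : ¬ Dominated 𝒜 (u.take m) := Nat.find_spec hex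
  have hmle : m ≤ u.length := Nat.find_min' hex (by rwa [List.take_length])
  have hm1 : 1 ≤ m := by
    rcases Nat.eq_zero_or_pos m with h0 | h
    · exact absurd (by rw [h0, List.take_zero]; exact dom_nil 𝒜) hm
    · exact h
  refine ⟨u.take m, u.drop m, ⟨hm, ?_⟩, (List.take_append_drop m u).symm⟩
  have hlt : (u.take m).dropLast = u.take (m - 1) := by
    rw [List.dropLast_eq_take, List.take_take]
    congr 1
    rw [List.length_take]
    omega
  rw [hlt]
  by_contra hdom
  exact Nat.find_min hex (show m - 1 < m by omega) hdom

lemma minBad_antichain {𝒜 : Set (ℕ → Fin N)} {w v : List (Fin N)} (hw : MinBad 𝒜 w)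
    (hv : MinBad 𝒜 v) (h : w <+: v) : w = v := by
  by_contra hne
  have hlt : w.length < v.length := by
    rcases lt_or_eq_of_le h.length_le with h' | h'
    · exact h'
    · exact absurd (List.IsPrefix.eq_of_length h h') hne
  have hpre : w <+: v.dropLast := by
    rw [List.dropLast_eq_take, List.prefix_take_iff]
    exact ⟨h, by omega⟩
  exact hw.1 (dom_of_prefix hpre hv.2)

/-- A `k`-chain: a prefix of `u` that is a concatenation of `k` minimal non-dominated
words. -/
def IsChainK (𝒜 : Set (ℕ → Fin N)) (k : ℕ) (u : List (Fin N)) : Prop :=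
  ∃ ws : List (List (Fin N)), ws.length = k ∧ (∀ w ∈ ws, MinBad 𝒜 w) ∧ ws.flatten <+: u

lemma good_decomp {𝒜 : Set (ℕ → Fin N)} :
    ∀ (k : ℕ) (u : List (Fin N)), ¬ IsChainK 𝒜 k u →
      ∃ ws : List (List (Fin N)), ws.length = k ∧ ws.flatten = u ∧
        (∀ w ∈ ws.take 1, Dominated 𝒜 w) ∧ (∀ w ∈ ws.drop 1, Dominated 𝒜 (w.drop 1)) := by
  intro k
  induction k with
  | zero =>
    intro u h
    exact absurd ⟨[], rfl, by simp, by simp⟩ h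
  | succ k ih =>
    intro u h
    by_cases hd : Dominated 𝒜 u
    · refine ⟨u :: List.replicate k [], by simp, by simp, ?_, ?_⟩
      · intro w hw
        have hw' : w = u := by simpa using hw
        rwa [hw']
      · intro w hw
        simp only [List.drop_one, List.tail_cons] at hw
        rw [List.eq_of_mem_replicate hw]
        exact dom_nil 𝒜
    · obtain ⟨w, r, hw, hur⟩ := exists_peel hd
      cases k with
      | zero =>
        refine absurd ⟨[w], rfl, by simpa using hw, ?_⟩ h
        rw [hur]
        simpa using List.prefix_append w r
      | succ k' =>
        have hchain : ¬ IsChainK 𝒜 (k' + 1) r := by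
          rintro ⟨ws, hl, hmem, hpre⟩
          refine h ⟨w :: ws, by simp [hl], ?_, ?_⟩
          · intro x hx
            rcases List.mem_cons.mp hx with rfl | hx
            · exact hw
            · exact hmem x hx
          · obtain ⟨t, ht⟩ := hpre
            exact ⟨t, by rw [hur, List.flatten_cons, List.append_assoc, ht]⟩
        obtain ⟨ws, hl, hfl, hhead, htail⟩ := ih r hchain
        obtain ⟨b, bs, rfl⟩ : ∃ b bs, ws = b :: bs := by
          cases ws with
          | nil => simp at hl
          | cons b bs => exact ⟨b, bs, rfl⟩
        have hwne : w ≠ [] := hw.ne_nil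
        refine ⟨w.dropLast :: (w.getLast hwne :: b) :: bs, ?_, ?_, ?_, ?_⟩
        · simp only [List.length_cons] at hl ⊢
          omega
        · have h2 : b ++ bs.flatten = r := by simpa [List.flatten_cons] using hfl
          calc (w.dropLast :: (w.getLast hwne :: b) :: bs).flatten
              = (w.dropLast ++ [w.getLast hwne]) ++ (b ++ bs.flatten) := by
                simp [List.flatten_cons]
            _ = w ++ r := by rw [List.dropLast_append_getLast hwne, h2]
            _ = u := hur.symm

        · intro x hx
          have hx' : x = w.dropLast := by simpa using hx
          rw [hx']
          exact hw.2
        · intro x hx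
          simp only [List.drop_one, List.tail_cons] at hx
          rcases List.mem_cons.mp hx with rfl | hx
          · simpa using hhead b (by simp)
          · exact htail x (by simpa using hx)




noncomputable def wt (p : Fin N → ℝ) (v : List (Fin N)) : ℝ≥0∞ :=
  (v.map fun a => ENNReal.ofReal (p a)).prod

lemma wt_append (p : Fin N → ℝ) (x y : List (Fin N)) :
    wt p (x ++ y) = wt p x * wt p y := by simp [wt]

lemma wt_flatten_ofFn (p : Fin N → ℝ) :
    ∀ (k : ℕ) (g : Fin k → List (Fin N)),
      wt p (List.ofFn g).flatten = ∏ t, wt p (g t)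
  | 0, g => by simp [wt]
  | (k+1), g => by
    rw [List.ofFn_succ, List.flatten_cons, wt_append, Fin.prod_univ_succ,
      wt_flatten_ofFn p k _]

lemma all_measurable {n : ℕ} (S : Set (Fin n → Fin N)) : MeasurableSet S :=
  S.toFinite.measurableSet

lemma nu_univ (p : Fin N → ℝ) (hp : ∀ i, 0 ≤ p i) (hp1 : ∑ i, p i = 1) :
    (∑ j, ENNReal.ofReal (p j) • Measure.dirac j : Measure (Fin N)) Set.univ = 1 := by
  have : (∑ j, ENNReal.ofReal (p j) • Measure.dirac j : Measure (Fin N)) Set.univ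
      = ∑ j, ENNReal.ofReal (p j) := by
    simp [Measure.finset_sum_apply, Measure.smul_apply]
  rw [this, ← ENNReal.ofReal_sum_of_nonneg (fun i _ => hp i), hp1, ENNReal.ofReal_one]

lemma nu_singleton (p : Fin N → ℝ) (a : Fin N) :
    (∑ j, ENNReal.ofReal (p j) • Measure.dirac j : Measure (Fin N)) {a}
      = ENNReal.ofReal (p a) := by
  simp [Measure.finset_sum_apply, Measure.smul_apply, Measure.dirac_apply,
    Set.indicator_apply]

lemma mu_cyl {n : ℕ} (p : Fin N → ℝ) (hp : ∀ i, 0 ≤ p i) (hp1 : ∑ i, p i = 1)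
    (v : List (Fin N)) (hv : v.length ≤ n) :
    Measure.pi (fun _ : Fin n => ∑ j, ENNReal.ofReal (p j) • Measure.dirac j)
      {i : Fin n → Fin N | v <+: List.ofFn i} = wt p v := by
  classical
  have hset : {i : Fin n → Fin N | v <+: List.ofFn i} =
      Set.univ.pi (fun t : Fin n =>
        if h : (t : ℕ) < v.length then {v[(t : ℕ)]} else Set.univ) := by
    ext i
    simp only [Set.mem_setOf_eq, Set.mem_pi, Set.mem_univ, forall_true_left]
    constructor
    · intro hpre t
      split_ifs with h
      · have h1 : v[(t : ℕ)] = (List.ofFn i)[(t : ℕ)]'(by simpa using t.isLt) :=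
          hpre.getElem h
        rw [List.getElem_ofFn] at h1
        simpa [Set.mem_singleton_iff] using h1.symm
      · trivial
    · intro hall
      rw [List.prefix_iff_eq_take]
      apply List.ext_getElem
      · simp only [List.length_take, List.length_ofFn]
        omega
      · intro t h1 h2
        have h3 := hall ⟨t, lt_of_lt_of_le h1 hv⟩
        rw [dif_pos (show t < v.length from h1)] at h3
        rw [Set.mem_singleton_iff] at h3
        rw [List.getElem_take, List.getElem_ofFn]
        exact h3.symm
  haveI : IsProbabilityMeasure
      (∑ j, ENNReal.ofReal (p j) • Measure.dirac j : Measure (Fin N)) :=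
    ⟨nu_univ p hp hp1⟩
  rw [hset, Measure.pi_pi]
  have hfact : ∀ t : Fin n,
      (∑ j, ENNReal.ofReal (p j) • Measure.dirac j : Measure (Fin N))
        (if h : (t : ℕ) < v.length then ({v[(t : ℕ)]} : Set (Fin N)) else Set.univ)
      = (if h : (t : ℕ) < v.length then ENNReal.ofReal (p (v[(t : ℕ)])) else 1) := by
    intro t
    split_ifs with h
    · exact nu_singleton p _
    · exact nu_univ p hp hp1
  rw [Finset.prod_congr rfl (fun t _ => hfact t)]
  set F : ℕ → ℝ≥0∞ := fun m => if h : m < v.length then ENNReal.ofReal (p (v[m])) else 1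
    with hF
  have hwt : wt p v = ∏ s : Fin v.length, ENNReal.ofReal (p (v[(s : ℕ)])) := by
    rw [wt]
    have hmap : v.map (fun a => ENNReal.ofReal (p a))
        = List.ofFn (fun s : Fin v.length => ENNReal.ofReal (p (v[(s : ℕ)]))) := by
      conv_lhs => rw [← List.ofFn_get v]
      rw [List.map_ofFn]
      rfl
    rw [hmap, List.prod_ofFn]
  rw [hwt]
  calc (∏ t : Fin n, if h : (t : ℕ) < v.length then ENNReal.ofReal (p (v[(t : ℕ)])) else 1)
      = ∏ m ∈ Finset.range n, F m := Fin.prod_univ_eq_prod_range F n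
    _ = ∏ m ∈ Finset.range v.length, F m := by
        refine (Finset.prod_subset (Finset.range_subset_range.mpr hv) ?_).symm
        intro x _ hx
        rw [hF]
        exact dif_neg (by simpa [Finset.mem_range] using hx)
    _ = ∏ s : Fin v.length, ENNReal.ofReal (p (v[(s : ℕ)])) := by
        rw [← Fin.prod_univ_eq_prod_range F v.length]
        exact Finset.prod_congr rfl (fun s _ => dif_pos s.isLt)

lemma tsum_pow {α : Type*} [Countable α] (f : α → ℝ≥0∞) :
    ∀ k : ℕ, (∑' g : Fin k → α, ∏ i, f (g i)) = (∑' a, f a) ^ k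
  | 0 => by
    rw [pow_zero, tsum_eq_single (default : Fin 0 → α)
      (fun b hb => absurd (Subsingleton.elim b default) hb)]
    simp
  | (k+1) => by
    calc (∑' g : Fin (k+1) → α, ∏ i, f (g i))
        = ∑' q : α × (Fin k → α), ∏ i, f ((Fin.consEquiv (fun _ : Fin (k+1) => α)) q i) :=
          ((Fin.consEquiv (fun _ : Fin (k+1) => α)).tsum_eq
            (fun g => ∏ i, f (g i))).symm
      _ = ∑' q : α × (Fin k → α), f q.1 * ∏ i, f (q.2 i) := by
          refine tsum_congr ?_
          rintro ⟨a, g⟩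
          rw [Fin.prod_univ_succ]
          simp [Fin.consEquiv_apply]
      _ = (∑' a, f a) * ∑' g : Fin k → α, ∏ i, f (g i) := by
          rw [ENNReal.tsum_prod']
          simp_rw [ENNReal.tsum_mul_left]
          rw [ENNReal.tsum_mul_right]
      _ = (∑' a, f a) ^ (k+1) := by
          rw [tsum_pow f k, pow_succ, mul_comm]


end Stmt11Proof

/-- If `ℙ(𝒜) ≥ β > 0` then, up to a set of `ℙ_n`-measure at most
`(1-β)^k`, every word of length `n` splits into `k` blocks each of which has one of its
first `k` shifts dominated by `𝒜`. -/
theorem stmt11 (N : ℕ) (p : Fin N → ℝ)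
    (hp : ∀ i, 0 < p i) (hp1 : ∑ i, p i = 1)
    (ℙ : Measure (ℕ → Fin N)) (hPprob : IsProbabilityMeasure ℙ)
    (hcyl : ∀ m : ℕ, ℙ.map (fun ω (k : Fin m) => ω k)
      = Measure.pi (fun _ : Fin m => ∑ j, ENNReal.ofReal (p j) • Measure.dirac j))
    (𝒜 : Set (ℕ → Fin N)) (h𝒜 : MeasurableSet 𝒜)
    (β : ℝ) (hβ : 0 < β) (hβ𝒜 : ENNReal.ofReal β ≤ ℙ 𝒜)
    (k n : ℕ) (hkn : k < n) :
    ∃ A : Set (Fin n → Fin N),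
      (Measure.pi fun _ : Fin n => ∑ j, ENNReal.ofReal (p j) • Measure.dirac j) Aᶜ
          ≤ ENNReal.ofReal ((1 - β) ^ k) ∧
      ∀ i ∈ A, ∃ ws : List (List (Fin N)),
        ws.length = k ∧ ws.flatten = List.ofFn i ∧
        ∀ w ∈ ws, ∃ t < k, Dominated 𝒜 (w.drop t) := by
  classical
  have hβ1 : β ≤ 1 := ENNReal.ofReal_le_one.mp (le_trans hβ𝒜 prob_le_one)
  have hple : ∀ i, 0 ≤ p i := fun i => (hp i).le
  refine ⟨{i | ¬ Stmt11Proof.IsChainK 𝒜 k (List.ofFn i)}, ?_, ?_⟩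
  · -- measure bound
    set μ : Measure (Fin n → Fin N) :=
      Measure.pi (fun _ : Fin n => ∑ j, ENNReal.ofReal (p j) • Measure.dirac j) with hμ
    set W' : Set (List (Fin N)) := {w | Stmt11Proof.MinBad 𝒜 w ∧ w.length ≤ n} with hW'
    set f : List (Fin N) → ℝ≥0∞ := W'.indicator (Stmt11Proof.wt p) with hf
    -- bound on the non-dominated set
    have hnotdom : μ {i : Fin n → Fin N | ¬ Dominated 𝒜 (List.ofFn i)}
        ≤ 1 - ENNReal.ofReal β := by
      have hπ : Measurable (fun ω : ℕ → Fin N => fun t : Fin n => ω t) :=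
        measurable_pi_lambda _ (fun t => measurable_pi_apply (t : ℕ))
      have hmap : μ {i : Fin n → Fin N | ¬ Dominated 𝒜 (List.ofFn i)}
          = ℙ ((fun ω : ℕ → Fin N => fun t : Fin n => ω t) ⁻¹'
              {i : Fin n → Fin N | ¬ Dominated 𝒜 (List.ofFn i)}) := by
        rw [hμ, ← hcyl n, Measure.map_apply hπ (Stmt11Proof.all_measurable _)]
      rw [hmap]
      have hsub : (fun ω : ℕ → Fin N => fun t : Fin n => ω t) ⁻¹'
          {i : Fin n → Fin N | ¬ Dominated 𝒜 (List.ofFn i)} ⊆ 𝒜ᶜ := by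
        intro ω hω hA
        exact hω (Or.inr ⟨ω, hA, fun t => by simp⟩)
      calc ℙ _ ≤ ℙ 𝒜ᶜ := measure_mono hsub
        _ = 1 - ℙ 𝒜 := prob_compl_eq_one_sub h𝒜
        _ ≤ 1 - ENNReal.ofReal β := tsub_le_tsub_left hβ𝒜 1
    -- total mass of minimal non-dominated words
    have hdisj : Pairwise (Function.onFun Disjoint
        (fun w : W' => {i : Fin n → Fin N | (w : List (Fin N)) <+: List.ofFn i})) := by
      intro w1 w2 hne
      simp only [Function.onFun]
      rw [Set.disjoint_left]
      intro i h1 h2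
      rcases List.prefix_or_prefix_of_prefix h1 h2 with h | h
      · exact hne (Subtype.ext (Stmt11Proof.minBad_antichain w1.2.1 w2.2.1 h))
      · exact hne (Subtype.ext (Stmt11Proof.minBad_antichain w2.2.1 w1.2.1 h).symm)
    have hsum1 : (∑' w : List (Fin N), f w) ≤ 1 - ENNReal.ofReal β := by
      rw [hf, ← tsum_subtype W' (Stmt11Proof.wt p)]
      have heq : ∀ w : W', Stmt11Proof.wt p (w : List (Fin N))
          = μ {i : Fin n → Fin N | (w : List (Fin N)) <+: List.ofFn i} :=
        fun w => (Stmt11Proof.mu_cyl p hple hp1 _ w.2.2).symm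
      rw [tsum_congr heq,
        ← measure_iUnion hdisj (fun _ => Stmt11Proof.all_measurable _)]
      refine le_trans (measure_mono ?_) hnotdom
      refine iUnion_subset ?_
      intro w i hi
      exact fun hdom => w.2.1.1 (Stmt11Proof.dom_of_prefix hi hdom)
    -- covering of the bad set
    set S : (Fin k → List (Fin N)) → Set (Fin n → Fin N) := fun g =>
      {i | (∀ t, Stmt11Proof.MinBad 𝒜 (g t)) ∧ (List.ofFn g).flatten <+: List.ofFn i}
      with hS
    have hcover : {i : Fin n → Fin N | ¬ Stmt11Proof.IsChainK 𝒜 k (List.ofFn i)}ᶜ ⊆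
        ⋃ g, S g := by
      intro i hi
      rw [Set.mem_compl_iff, Set.mem_setOf_eq, not_not] at hi
      obtain ⟨ws, hl, hmem, hpre⟩ := hi
      refine mem_iUnion.mpr ⟨fun t => ws.get (Fin.cast hl.symm t), ?_, ?_⟩
      · intro t
        exact hmem _ (ws.get_mem _)
      · have hofn : List.ofFn (fun t : Fin k => ws.get (Fin.cast hl.symm t)) = ws := by
          apply List.ext_getElem (by simp [hl])
          intro t h1 h2
          simp [List.getElem_ofFn, List.get_eq_getElem]
        rw [hofn]
        exact hpre
    have hSg : ∀ g : Fin k → List (Fin N), μ (S g) ≤ ∏ t, f (g t) := by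
      intro g
      by_cases hall : ∀ t, Stmt11Proof.MinBad 𝒜 (g t)
      · by_cases hlen : (List.ofFn g).flatten.length ≤ n
        · have hcomp : ∀ t, (g t).length ≤ (List.ofFn g).flatten.length := by
            intro t
            have hmem : g t ∈ List.ofFn g := by
              rw [List.mem_ofFn]
              exact ⟨t, rfl⟩
            obtain ⟨s1, s2, hsplit⟩ := List.append_of_mem hmem
            rw [hsplit]
            simp only [List.flatten_append, List.flatten_cons, List.length_append]
            omega
          have hSeq : S g = {i : Fin n → Fin N | (List.ofFn g).flatten <+: List.ofFn i} := by
            ext i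
            simp [hS, hall]
          rw [hSeq, Stmt11Proof.mu_cyl p hple hp1 _ hlen, Stmt11Proof.wt_flatten_ofFn]
          refine le_of_eq (Finset.prod_congr rfl ?_)
          intro t _
          rw [hf, Set.indicator_of_mem]
          exact ⟨hall t, le_trans (hcomp t) hlen⟩
        · have hempty : S g = ∅ := by
            ext i
            simp only [hS, Set.mem_setOf_eq, Set.mem_empty_iff_false, iff_false, not_and]
            intro _ hpre
            exact absurd (by simpa using hpre.length_le) hlen
          rw [hempty]
          simp
      · have hempty : S g = ∅ := by
          ext i
          simp only [hS, Set.mem_setOf_eq, Set.mem_empty_iff_false, iff_false, not_and]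
          intro h1
          exact absurd h1 hall
        rw [hempty]
        simp
    calc μ {i : Fin n → Fin N | ¬ Stmt11Proof.IsChainK 𝒜 k (List.ofFn i)}ᶜ
        ≤ μ (⋃ g, S g) := measure_mono hcover
      _ ≤ ∑' g, μ (S g) := measure_iUnion_le S
      _ ≤ ∑' g : Fin k → List (Fin N), ∏ t, f (g t) := ENNReal.tsum_le_tsum hSg
      _ = (∑' w, f w) ^ k := Stmt11Proof.tsum_pow f k
      _ ≤ (1 - ENNReal.ofReal β) ^ k := pow_le_pow_left' hsum1 k
      _ = ENNReal.ofReal ((1 - β) ^ k) := by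
          rw [ENNReal.ofReal_pow (by linarith) k, ENNReal.ofReal_sub 1 hβ.le,
            ENNReal.ofReal_one]
  · -- decomposition of good words
    intro i hi
    obtain ⟨ws, hl, hfl, hhead, htail⟩ := Stmt11Proof.good_decomp k (List.ofFn i) hi
    refine ⟨ws, hl, hfl, ?_⟩
    intro w hw
    rw [← List.take_append_drop 1 ws] at hw
    rcases List.mem_append.mp hw with h1 | h1
    · have hne : ws ≠ [] := by
        rintro rfl
        simp at h1
      have hk1 : 1 ≤ k := by
        rw [← hl]
        exact List.length_pos_iff.mpr hne
      exact ⟨0, hk1, by simpa using hhead w h1⟩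
    · have hlen1 : 0 < (ws.drop 1).length :=
        List.length_pos_iff.mpr (List.ne_nil_of_mem h1)
      rw [List.length_drop] at hlen1
      exact ⟨1, by omega, htail w h1⟩
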